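/- For every n ≥ 1, the number of automorphisms of the maximally balanced rooted bifurcating tree with n leaves equals 2^{n − 1 − c(n)}, where c(n) is the minimum Colless index for n leaves, defined by c(1) = 0, c(2n) = 2·c(n), c(2n+1) = c(n+1) + c(n) + 1. -/
import Mathlib


inductive BTree where
  | leaf : BTree
  | node : BTree → BTree → BTree
deriving DecidableEq

def BTree.leaves : BTree → ℕ
  | .leaf => 1
  | .node l r => l.leaves + r.leaves

/-- The number of automorphisms of a rooted bifurcating tree shape:
`2` raised to the number of symmetry vertices. -/
def BTree.autCount : BTree → ℕ
  | .leaf => 1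
  | .node l r => (if l = r then 2 else 1) * l.autCount * r.autCount

/-- The maximally balanced bifurcating tree with `n` leaves. -/
def mb (n : ℕ) : BTree :=
  if h : n ≤ 1 then BTree.leaf
  else BTree.node (mb ((n + 1) / 2)) (mb (n / 2))
termination_by n
decreasing_by all_goals omega

lemma mb_leaves : ∀ n : ℕ, 1 ≤ n → (mb n).leaves = n := by
  intro n
  induction n using Nat.strong_induction_on with
  | _ n ih =>
    intro hn
    rw [mb]
    split
    · simp only [BTree.leaves]; omega
    · have h1 := ih ((n + 1) / 2) (by omega) (by omega)
      have h2 := ih (n / 2) (by omega) (by omega)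
      simp only [BTree.leaves, h1, h2]; omega

theorem maxBalanced_autCount (c : ℕ → ℕ) (h1 : c 1 = 0)
    (heven : ∀ n : ℕ, 1 ≤ n → c (2 * n) = 2 * c n)
    (hodd : ∀ n : ℕ, 1 ≤ n → c (2 * n + 1) = c (n + 1) + c n + 1) :
    ∀ n : ℕ, 1 ≤ n → (mb n).autCount = 2 ^ (n - 1 - c n) := by
  have hle : ∀ n : ℕ, 1 ≤ n → c n + 1 ≤ n := by
    intro n
    induction n using Nat.strong_induction_on with
    | _ n ih =>
      intro hn
      rcases Nat.even_or_odd n with ⟨m, hm⟩ | ⟨m, hm⟩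
      · have hm1 : 1 ≤ m := by omega
        have := ih m (by omega) hm1
        rw [hm, show m + m = 2 * m by ring, heven m hm1]
        omega
      · rcases Nat.eq_or_lt_of_le hn with h | h
        · rw [← h, h1]
        · have hm1 : 1 ≤ m := by omega
          have hA := ih m (by omega) hm1
          have hB := ih (m + 1) (by omega) (by omega)
          rw [hm, hodd m hm1]
          omega
  intro n
  induction n using Nat.strong_induction_on with
  | _ n ih =>
    intro hn
    rcases Nat.lt_or_ge n 2 with h | h
    · have : n = 1 := by omega
      subst this
      rw [mb, dif_pos (by omega)]
      simp [BTree.autCount, h1]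
    · rw [mb, dif_neg (by omega)]
      rcases Nat.even_or_odd n with ⟨m, hm⟩ | ⟨m, hm⟩
      · have hm1 : 1 ≤ m := by omega
        have e1 : (n + 1) / 2 = m := by omega
        have e2 : n / 2 = m := by omega
        rw [e1, e2]
        simp only [BTree.autCount, if_pos rfl]
        rw [ih m (by omega) hm1]
        have hcm := hle m hm1
        have hcn : c n = 2 * c m := by rw [hm, show m + m = 2 * m by ring, heven m hm1]
        calc 2 * 2 ^ (m - 1 - c m) * 2 ^ (m - 1 - c m)
            = 2 ^ (1 + (m - 1 - c m) + (m - 1 - c m)) := by rw [pow_add, pow_add, pow_one]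
          _ = 2 ^ (n - 1 - c n) := by congr 1; omega
      · have hm1 : 1 ≤ m := by omega
        have e1 : (n + 1) / 2 = m + 1 := by omega
        have e2 : n / 2 = m := by omega
        rw [e1, e2]
        have hne : mb (m + 1) ≠ mb m := by
          intro hEq
          have l1 := mb_leaves (m + 1) (by omega)
          have l2 := mb_leaves m hm1
          rw [hEq, l2] at l1
          omega
        simp only [BTree.autCount, if_neg hne, one_mul]
        rw [ih (m + 1) (by omega) (by omega), ih m (by omega) hm1]
        have hA := hle m hm1
        have hB := hle (m + 1) (by omega : 1 ≤ m + 1)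
        have hcn : c n = c (m + 1) + c m + 1 := by
          rw [hm, show 2 * m + 1 = 2 * m + 1 from rfl, hodd m hm1]
        calc 2 ^ (m + 1 - 1 - c (m + 1)) * 2 ^ (m - 1 - c m)
            = 2 ^ ((m + 1 - 1 - c (m + 1)) + (m - 1 - c m)) := by rw [pow_add]
          _ = 2 ^ (n - 1 - c n) := by congr 1; omega
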